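/- arXiv:2204.13977 — 2 statements merged into one kernel-verified Lean document; each statement's English description precedes it below -/
import Mathlib

section
/- Let m,n ≥ 0 and let i,j,r,l satisfy r,l ≥ 1, i+2r ≤ F(m), j+2l ≤ F(n). Then in the Fibonacci array f_{m,n}, the diagonal blocks are equal, f_{m,n}[(i,j);(r,l)] = f_{m,n}[(i+r,j+l);(r,l)], if and only if all four blocks f_{m,n}[(i,j);(r,l)], f_{m,n}[(i,j+l);(r,l)], f_{m,n}[(i+r,j);(r,l)], f_{m,n}[(i+r,j+l);(r,l)] are equal. (In a Fibonacci array, a Type II(a) tandem occurs only as part of a quartic.) -/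
/-- Fibonacci numbers: F(0)=1, F(1)=1, F(n+2)=F(n+1)+F(n). -/
def F : ℕ → ℕ
  | 0 => 1
  | 1 => 1
  | n + 2 => F (n + 1) + F n

/-- Finite Fibonacci words over {a,b} coded as Fin 2 (a=0, b=1). -/
def fibWord : ℕ → List (Fin 2)
  | 0 => [0]
  | 1 => [1]
  | n + 2 => fibWord (n + 1) ++ fibWord n

/-- The Fibonacci arrays f_{m,n} over {a,b,c,d} coded as Fin 2 × Fin 2,
with a=(0,0), b=(0,1), c=(1,0), d=(1,1); `fibArr m n i j` is the (i,j) entry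
(0-indexed, only indices i < F m, j < F n are meaningful). -/
def fibArr : ℕ → ℕ → ℕ → ℕ → Fin 2 × Fin 2
  | 0, 0, _, _ => (0, 0)
  | 0, 1, _, _ => (0, 1)
  | 1, 0, _, _ => (1, 0)
  | 1, 1, _, _ => (1, 1)
  | 0, n + 2, i, j =>
      if j < F (n + 1) then fibArr 0 (n + 1) i j else fibArr 0 n i (j - F (n + 1))
  | 1, n + 2, i, j =>
      if j < F (n + 1) then fibArr 1 (n + 1) i j else fibArr 1 n i (j - F (n + 1))
  | m + 2, k, i, j =>
      if i < F (m + 1) then fibArr (m + 1) k i j else fibArr m k (i - F (m + 1)) j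
  termination_by m n => (m, n)

/-- The r × l subarray of u with top-left entry at (i,j). -/
def subarr (u : ℕ → ℕ → Fin 2 × Fin 2) (i j r l : ℕ) : Fin r × Fin l → Fin 2 × Fin 2 :=
  fun p => u (i + p.1.val) (j + p.2.val)

/-- Number of square occurrences in a finite word. -/
noncomputable def sqOcc (w : List (Fin 2)) : ℕ :=
  {p : ℕ × ℕ | 1 ≤ p.2 ∧ p.1 + 2 * p.2 ≤ w.length ∧
    ∀ t < p.2, w.getD (p.1 + t) 0 = w.getD (p.1 + p.2 + t) 0}.ncard

/-- R(n): number of square occurrences in f_n. -/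
noncomputable def R (n : ℕ) : ℕ := sqOcc (fibWord n)

/-- Row component of the Fibonacci array. -/
def rowC : ℕ → ℕ → Fin 2
  | 0, _ => 0
  | 1, _ => 1
  | m + 2, i => if i < F (m + 1) then rowC (m + 1) i else rowC m (i - F (m + 1))

/-- Column component of the Fibonacci array. -/
def colC : ℕ → ℕ → Fin 2
  | 0, _ => 0
  | 1, _ => 1
  | n + 2, j => if j < F (n + 1) then colC (n + 1) j else colC n (j - F (n + 1))

lemma fibArr_eq : ∀ m n i j, fibArr m n i j = (rowC m i, colC n j)
  | 0, 0, i, j => by simp [fibArr, rowC, colC]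
  | 0, 1, i, j => by simp [fibArr, rowC, colC]
  | 1, 0, i, j => by simp [fibArr, rowC, colC]
  | 1, 1, i, j => by simp [fibArr, rowC, colC]
  | 0, n + 2, i, j => by
      rw [fibArr, colC]
      split <;> rw [fibArr_eq] <;> simp [rowC]
  | 1, n + 2, i, j => by
      rw [fibArr, colC]
      split <;> rw [fibArr_eq] <;> simp [rowC]
  | m + 2, n, i, j => by
      rw [fibArr.eq_7, rowC]
      split <;> rw [fibArr_eq]
  termination_by m n => (m, n)

/-- In a Fibonacci array, for r,l ≥ 1 with i+2r ≤ F(m), j+2l ≤ F(n),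
the diagonal blocks are equal (a Type II(a) tandem occurs) iff all four blocks are equal
(a quartic occurs). -/
theorem stmt4 (m n i j r l : ℕ) (hr : 1 ≤ r) (hl : 1 ≤ l)
    (hi : i + 2 * r ≤ F m) (hj : j + 2 * l ≤ F n) :
    subarr (fibArr m n) i j r l = subarr (fibArr m n) (i + r) (j + l) r l ↔
      (subarr (fibArr m n) i j r l = subarr (fibArr m n) i (j + l) r l ∧
       subarr (fibArr m n) i j r l = subarr (fibArr m n) (i + r) j r l ∧
       subarr (fibArr m n) i j r l = subarr (fibArr m n) (i + r) (j + l) r l) := by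
  
  constructor
  · intro h
    refine ⟨?_, ?_, h⟩ <;> funext p <;>
      obtain ⟨⟨p1, hp1⟩, ⟨p2, hp2⟩⟩ := p
    · have h2 := congrFun h (⟨0, hr⟩, ⟨p2, hp2⟩)
      simp only [subarr, fibArr_eq, Prod.mk.injEq] at h2 ⊢
      exact ⟨trivial, h2.2⟩
    · have h1 := congrFun h (⟨p1, hp1⟩, ⟨0, hl⟩)
      simp only [subarr, fibArr_eq, Prod.mk.injEq] at h1 ⊢
      exact ⟨h1.1, trivial⟩
  · exact fun h => h.2.2
end

section
/- For m ≥ 5 and n ≥ 2, the number of distinct Type I(b) tandems occurring in the Fibonacci array f_{m,n} equals D(m)·p(f_n); here the count of distinct Type I(b) tandems is the sum over all sizes (2r,l) with r,l ≥ 1 of the number of distinct 2r × l arrays X such that X occurs as a subarray of f_{m,n} and the top r × l half of X equals its bottom r × l half, D(m) is the number of distinct squares that are factors of the 1D Fibonacci word f_m, and p(f_n) is the number of distinct nonempty factors of f_n. -/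
/-- Number of distinct nonempty factors of a word. -/
noncomputable def pFact (w : List (Fin 2)) : ℕ :=
  {v : List (Fin 2) | v ≠ [] ∧ v <:+: w}.ncard

/-- D(n): number of distinct (nonempty) squares xx occurring as factors of f_n. -/
noncomputable def D (n : ℕ) : ℕ :=
  {x : List (Fin 2) | x ≠ [] ∧ x ++ x <:+: fibWord n}.ncard

/-- The r × c array X occurs as a subarray of the Fibonacci array f_{m,n}. -/
def occursIn (m n r c : ℕ) (X : Fin r × Fin c → Fin 2 × Fin 2) : Prop :=
  ∃ i j, i + r ≤ F m ∧ j + c ≤ F n ∧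
    ∀ p : Fin r × Fin c, X p = fibArr m n (i + p.1.val) (j + p.2.val)

lemma length_fibWord (n : ℕ) : (fibWord n).length = F n := by
  induction n using fibWord.induct <;> simp [fibWord, F, *]

lemma fibArr_eq_s9 (m n i j : ℕ) (hi : i < F m) (hj : j < F n) :
    fibArr m n i j = ((fibWord m).getD i 0, (fibWord n).getD j 0) := by
  induction m, n, i, j using fibArr.induct with
  | case1 i j =>
      simp only [F] at hi hj
      rw [show i = 0 by omega, show j = 0 by omega]; simp [fibArr, fibWord]
  | case2 i j =>
      simp only [F] at hi hj
      rw [show i = 0 by omega, show j = 0 by omega]; simp [fibArr, fibWord]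
  | case3 i j =>
      simp only [F] at hi hj
      rw [show i = 0 by omega, show j = 0 by omega]; simp [fibArr, fibWord]
  | case4 i j =>
      simp only [F] at hi hj
      rw [show i = 0 by omega, show j = 0 by omega]; simp [fibArr, fibWord]
  | case5 n i j h ih =>
      rw [fibArr, if_pos h, ih hi h, show fibWord (n+2) = fibWord (n+1) ++ fibWord n from rfl,
        List.getD_append _ _ _ _ (by rw [length_fibWord]; exact h)]
  | case6 n i j h ih =>
      rw [fibArr, if_neg h]
      rw [F] at hj
      rw [ih hi (by omega), show fibWord (n+2) = fibWord (n+1) ++ fibWord n from rfl,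
        List.getD_append_right _ _ _ _ (by rw [length_fibWord]; omega), length_fibWord]
  | case7 n i j h ih =>
      rw [fibArr, if_pos h, ih hi h, show fibWord (n+2) = fibWord (n+1) ++ fibWord n from rfl,
        List.getD_append _ _ _ _ (by rw [length_fibWord]; exact h)]
  | case8 n i j h ih =>
      rw [fibArr, if_neg h]
      rw [F] at hj
      rw [ih hi (by omega), show fibWord (n+2) = fibWord (n+1) ++ fibWord n from rfl,
        List.getD_append_right _ _ _ _ (by rw [length_fibWord]; omega), length_fibWord]
  | case9 m k i j h ih =>
      rw [fibArr, if_pos h, ih h hj, show fibWord (m+2) = fibWord (m+1) ++ fibWord m from rfl,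
        List.getD_append _ _ _ _ (by rw [length_fibWord]; exact h)]
  | case10 m k i j h ih =>
      rw [fibArr, if_neg h]
      rw [F] at hi
      rw [ih (by omega) hj, show fibWord (m+2) = fibWord (m+1) ++ fibWord m from rfl,
        List.getD_append_right _ _ _ _ (by rw [length_fibWord]; omega), length_fibWord]

def Psi (x v : List (Fin 2)) : (r : ℕ) × (l : ℕ) × (Fin (2 * r) × Fin l → Fin 2 × Fin 2) :=
  ⟨x.length, v.length, fun p => ((x ++ x).getD p.1.1 0, v.getD p.2.1 0)⟩

def Gfn : ((r : ℕ) × (l : ℕ) × (Fin (2 * r) × Fin l → Fin 2 × Fin 2)) → List (Fin 2) × List (Fin 2) :=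
  fun s => (List.ofFn (fun p : Fin s.1 => if h : 0 < s.2.1 then (s.2.2 (⟨p.1, by omega⟩, ⟨0, h⟩)).1 else 0),
            List.ofFn (fun q : Fin s.2.1 => if h : 0 < s.1 then (s.2.2 (⟨0, by omega⟩, q)).2 else 0))

lemma G_Psi (x v : List (Fin 2)) (hx : x ≠ []) (hv : v ≠ []) : Gfn (Psi x v) = (x, v) := by
  have hx' : 0 < x.length := List.length_pos_iff.2 hx
  have hv' : 0 < v.length := List.length_pos_iff.2 hv
  unfold Gfn Psi
  refine Prod.ext ?_ ?_ <;> simp only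
  · conv_rhs => rw [← List.ofFn_getElem (xs := x)]
    congr 1
    funext p
    rw [dif_pos hv', List.getD_append _ _ _ _ (by exact p.2), List.getD_eq_getElem _ _ p.2]
  · conv_rhs => rw [← List.ofFn_getElem (xs := v)]
    congr 1
    funext q
    rw [dif_pos hx', List.getD_eq_getElem _ _ q.2]

lemma Psi_eq {r l : ℕ} (X : Fin (2 * r) × Fin l → Fin 2 × Fin 2) (x v : List (Fin 2))
    (hx : x.length = r) (hv : v.length = l)
    (h : ∀ (p : Fin (2 * r)) (q : Fin l), X (p, q) = ((x ++ x).getD p.1 0, v.getD q.1 0)) :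
    Psi x v = ⟨r, l, X⟩ := by
  subst hx hv
  unfold Psi
  have : (fun p : Fin (2 * x.length) × Fin v.length =>
      ((x ++ x).getD p.1.1 0, v.getD p.2.1 0)) = X := by
    funext p
    obtain ⟨a, b⟩ := p
    exact (h a b).symm
  rw [this]

/-- For m ≥ 5 and n ≥ 2, the number of distinct Type I(b) tandems in f_{m,n}
(counted over all sizes (2r,l), r,l ≥ 1: distinct 2r × l arrays X occurring in f_{m,n}
whose top r × l half equals its bottom r × l half) equals D(m)·p(f_n). -/
theorem stmt9 (m n : ℕ) (hm : 5 ≤ m) (hn : 2 ≤ n) :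
    {x : (r : ℕ) × (l : ℕ) × (Fin (2 * r) × Fin l → Fin 2 × Fin 2) |
      1 ≤ x.1 ∧ 1 ≤ x.2.1 ∧ occursIn m n (2 * x.1) x.2.1 x.2.2 ∧
      ∀ (p : Fin x.1) (q : Fin x.2.1),
        x.2.2 (⟨p.val, by have := p.isLt; omega⟩, q)
          = x.2.2 (⟨p.val + x.1, by have := p.isLt; omega⟩, q)}.ncard
      = D m * pFact (fibWord n) := by
  classical
  set A : Set (List (Fin 2)) := {x | x ≠ [] ∧ x ++ x <:+: fibWord m} with hA
  set B : Set (List (Fin 2)) := {v | v ≠ [] ∧ v <:+: fibWord n} with hB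
  have hlm := length_fibWord m
  have hln := length_fibWord n
  have hset : {x : (r : ℕ) × (l : ℕ) × (Fin (2 * r) × Fin l → Fin 2 × Fin 2) |
      1 ≤ x.1 ∧ 1 ≤ x.2.1 ∧ occursIn m n (2 * x.1) x.2.1 x.2.2 ∧
      ∀ (p : Fin x.1) (q : Fin x.2.1),
        x.2.2 (⟨p.val, by have := p.isLt; omega⟩, q)
          = x.2.2 (⟨p.val + x.1, by have := p.isLt; omega⟩, q)}
      = (fun q : List (Fin 2) × List (Fin 2) => Psi q.1 q.2) '' (A ×ˢ B) := by
    ext el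
    constructor
    · intro hel
      obtain ⟨r, l, X⟩ := el
      obtain ⟨hr, hl, ⟨i, j, hiF, hjF, hX⟩, hT⟩ := hel
      dsimp only at hr hl hiF hjF hX hT
      -- entry formula
      have hXe : ∀ (p : Fin (2 * r)) (q : Fin l),
          X (p, q) = ((fibWord m).getD (i + p.1) 0, (fibWord n).getD (j + q.1) 0) := by
        intro p q
        rw [hX (p, q), fibArr_eq_s9 m n _ _ (by have := p.2; omega) (by have := q.2; omega)]
      -- periodicity of rows
      have hper : ∀ k, k < r → (fibWord m).getD (i + k) 0 = (fibWord m).getD (i + k + r) 0 := by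
        intro k hk
        have h1 := hT ⟨k, hk⟩ ⟨0, by omega⟩
        rw [hXe, hXe] at h1
        have h2 := congrArg Prod.fst h1
        simp only at h2
        rw [← Nat.add_assoc] at h2
        exact h2
      set x : List (Fin 2) := ((fibWord m).drop i).take r with hxdef
      set v : List (Fin 2) := ((fibWord n).drop j).take l with hvdef
      have hxlen : x.length = r := by
        simp only [hxdef, List.length_take, List.length_drop, hlm]; omega
      have hvlen : v.length = l := by
        simp only [hvdef, List.length_take, List.length_drop, hln]; omega
      have pointg : ∀ k, k < r → x.getD k 0 = (fibWord m).getD (i + k) 0 := by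
        intro k hk
        rw [List.getD_eq_getElem _ _ (by omega : k < x.length),
          List.getD_eq_getElem _ _ (by omega : i + k < (fibWord m).length)]
        simp only [hxdef, List.getElem_take, List.getElem_drop]
      have pointv : ∀ k, k < l → v.getD k 0 = (fibWord n).getD (j + k) 0 := by
        intro k hk
        rw [List.getD_eq_getElem _ _ (by omega : k < v.length),
          List.getD_eq_getElem _ _ (by omega : j + k < (fibWord n).length)]
        simp only [hvdef, List.getElem_take, List.getElem_drop]
      have key : ∀ k, k < 2 * r → (x ++ x).getD k 0 = (fibWord m).getD (i + k) 0 := by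
        intro k hk
        by_cases hkr : k < r
        · rw [List.getD_append _ _ _ _ (by omega : k < x.length)]
          exact pointg k hkr
        · rw [List.getD_append_right _ _ _ _ (by omega : x.length ≤ k), hxlen]
          rw [pointg (k - r) (by omega)]
          have := hper (k - r) (by omega)
          rw [show i + (k - r) + r = i + k by omega] at this
          exact this
      have hxne : x ≠ [] := List.length_pos_iff.1 (by omega)
      have hvne : v ≠ [] := List.length_pos_iff.1 (by omega)
      have hxxeq : x ++ x = ((fibWord m).drop i).take (2 * r) := by
        apply List.ext_getElem
        · simp only [List.length_append, hxlen, List.length_take, List.length_drop, hlm]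
          omega
        · intro k h1 h2
          have hk : k < 2 * r := by
            simp only [List.length_append, hxlen] at h1; omega
          rw [← List.getD_eq_getElem _ 0 h1, key k hk]
          rw [List.getD_eq_getElem _ _ (by omega : i + k < (fibWord m).length)]
          simp only [List.getElem_take, List.getElem_drop]
      refine ⟨(x, v), ⟨⟨hxne, ?_⟩, hvne, ?_⟩, ?_⟩
      · rw [hxxeq]
        exact (List.take_prefix _ _).isInfix.trans (List.drop_suffix _ _).isInfix
      · exact ((List.take_prefix _ _).isInfix.trans (List.drop_suffix _ _).isInfix)
      · refine Psi_eq X x v hxlen hvlen ?_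
        intro p q
        rw [hXe p q, ← key p.1 p.2, ← pointv q.1 q.2]
    · rintro ⟨⟨x, v⟩, ⟨⟨hxne, hxx⟩, hvne, hvI⟩, rfl⟩
      have hx' : 0 < x.length := List.length_pos_iff.2 hxne
      have hv' : 0 < v.length := List.length_pos_iff.2 hvne
      obtain ⟨s, t, hst⟩ := hxx
      obtain ⟨u, w, huw⟩ := hvI
      have hslen : s.length + 2 * x.length + t.length = F m := by
        have := congrArg List.length hst
        simp only [List.length_append, hlm] at this
        omega
      have hulen : u.length + v.length + w.length = F n := by
        have := congrArg List.length huw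
        simp only [List.length_append, hln] at this
        omega
      have keyx : ∀ k, k < 2 * x.length →
          (fibWord m).getD (s.length + k) 0 = (x ++ x).getD k 0 := by
        intro k hk
        rw [← hst, List.append_assoc,
          List.getD_append_right _ _ _ _ (by omega : s.length ≤ s.length + k),
          Nat.add_sub_cancel_left,
          List.getD_append _ _ _ _ (by simp only [List.length_append]; omega)]
      have keyv : ∀ k, k < v.length →
          (fibWord n).getD (u.length + k) 0 = v.getD k 0 := by
        intro k hk
        rw [← huw, List.append_assoc,
          List.getD_append_right _ _ _ _ (by omega : u.length ≤ u.length + k),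
          Nat.add_sub_cancel_left,
          List.getD_append _ _ _ _ (by omega : k < v.length)]
      refine ⟨hx', hv', ?_, ?_⟩
      · refine ⟨s.length, u.length,
          show s.length + 2 * x.length ≤ F m by omega,
          show u.length + v.length ≤ F n by omega, ?_⟩
        rintro ⟨p, q⟩
        have hp : (p : ℕ) < 2 * x.length := p.2
        have hq : (q : ℕ) < v.length := q.2
        show ((x ++ x).getD p.1 0, v.getD q.1 0) = fibArr m n (s.length + p.1) (u.length + q.1)
        rw [fibArr_eq_s9 m n _ _ (by omega) (by omega), keyx p.1 hp, keyv q.1 hq]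
      · intro p q
        have hp : (p : ℕ) < x.length := p.2
        show ((x ++ x).getD p.1 0, v.getD q.1 0)
            = ((x ++ x).getD (p.1 + x.length) 0, v.getD q.1 0)
        refine Prod.ext ?_ rfl
        show (x ++ x).getD p.1 0 = (x ++ x).getD (p.1 + x.length) 0
        rw [List.getD_append _ _ _ _ (by omega : (p : ℕ) < x.length),
          List.getD_append_right _ _ _ _ (by omega : x.length ≤ (p : ℕ) + x.length)]
        congr 1
        omega
  rw [hset, Set.ncard_image_of_injOn, ← Nat.card_coe_set_eq,
    Nat.card_congr (Equiv.Set.prod A B), Nat.card_prod,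
    Nat.card_coe_set_eq, Nat.card_coe_set_eq]
  · rfl
  · rintro ⟨x, v⟩ hxy ⟨x', v'⟩ hxy' h
    simp only [Set.mem_prod, hA, hB, Set.mem_setOf_eq] at hxy hxy'
    have := congrArg Gfn h
    rw [G_Psi x v hxy.1.1 hxy.2.1, G_Psi x' v' hxy'.1.1 hxy'.2.1] at this
    exact this
end
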